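/- Let A = (α, μ, β) be a P-finite automaton of dimension n over Σ and let d_max be the maximal degree of the polynomial entries of β and of the matrices μ(σ), σ ∈ Σ. Let C = [c_1,…,c_m] be a totally suffix-closed sequence of words and for 1 ≤ i ≤ m set M_i := span_{ℚ[x]}{B_A(c_j) : j ≤ i}. If the chain M_1 ⊊ M_2 ⊊ ⋯ ⊊ M_m is strictly increasing, then m ≤ (d_max+1)^n · n^{2n}. -/

import Mathlib

set_option maxHeartbeats 2000000


open Polynomial Matrix

/-- Substitute `x + k` for `x` in a polynomial. -/
noncomputable def shiftP (k : ℕ) (p : Polynomial ℚ) : Polynomial ℚ :=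
  p.comp (Polynomial.X + Polynomial.C (k : ℚ))

/-- The extension of the transition map `μ` of a P-finite automaton to words:
`μ(σ₁⋯σₖ)(x) = μ(σ₁)(x)·μ(σ₂)(x+1)⋯μ(σₖ)(x+k-1)`, so that
`μ(ε)(x) = I` and `μ(wσ)(x) = μ(w)(x)·μ(σ)(x+|w|)`. -/
noncomputable def muWord {S ι : Type*} [Fintype ι] [DecidableEq ι]
    (μ : S → Matrix ι ι (Polynomial ℚ)) (w : List S) : Matrix ι ι (Polynomial ℚ) :=
  (w.zipIdx.map (fun p => (μ p.1).map (shiftP p.2))).prod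

/-- The function computed by the P-finite automaton `(α, μ, β)`:
`f_A(w) = α·μ(w,1)·β(|w|+1)`. -/
noncomputable def fAut {S ι : Type*} [Fintype ι] [DecidableEq ι]
    (α : ι → ℚ) (μ : S → Matrix ι ι (Polynomial ℚ)) (β : ι → Polynomial ℚ)
    (w : List S) : ℚ :=
  α ⬝ᵥ ((muWord μ w).map (Polynomial.eval (1 : ℚ))).mulVec
      (fun i => (β i).eval ((w.length : ℚ) + 1))

/-- The backward function of a P-finite automaton: `B_A(u)(x) = μ(u)(x)·β(x+|u|)`. -/
noncomputable def backF {S ι : Type*} [Fintype ι] [DecidableEq ι]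
    (μ : S → Matrix ι ι (Polynomial ℚ)) (β : ι → Polynomial ℚ)
    (w : List S) : ι → Polynomial ℚ :=
  (muWord μ w).mulVec (fun i => shiftP w.length (β i))


open Module Submodule

lemma CCB_natDegree_shiftP (k : ℕ) (p : Polynomial ℚ) :
    (shiftP k p).natDegree ≤ p.natDegree := by
  rw [shiftP]
  refine le_trans Polynomial.natDegree_comp_le ?_
  rw [Polynomial.natDegree_X_add_C]
  omega

lemma CCB_listprod_deg {n : ℕ} (D : ℕ) :
    ∀ (L : List (Matrix (Fin n) (Fin n) (Polynomial ℚ))),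
      (∀ A ∈ L, ∀ a b, (A a b).natDegree ≤ D) →
      ∀ a b, (L.prod a b).natDegree ≤ D * L.length := by
  intro L
  induction L with
  | nil =>
    intro _ a b
    by_cases hab : a = b <;> simp [Matrix.one_apply, hab]
  | cons A L ih =>
    intro h a b
    rw [List.prod_cons]
    rw [Matrix.mul_apply]
    apply Polynomial.natDegree_sum_le_of_forall_le
    intro k _
    refine (Polynomial.natDegree_mul_le).trans ?_
    have h1 : (A a k).natDegree ≤ D := h A List.mem_cons_self a k
    have h2 : (L.prod k b).natDegree ≤ D * L.length :=
      ih (fun B hB => h B (List.mem_cons_of_mem _ hB)) k b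
    calc (A a k).natDegree + (L.prod k b).natDegree ≤ D + D * L.length := by omega
    _ = D * (A :: L).length := by simp [List.length_cons]; ring

lemma CCB_muWord_deg {S : Type*} {n : ℕ} (D : ℕ) (μ : S → Matrix (Fin n) (Fin n) (Polynomial ℚ))
    (hμ : ∀ σ a b, ((μ σ) a b).natDegree ≤ D) (w : List S) (a b : Fin n) :
    ((muWord μ w) a b).natDegree ≤ D * w.length := by
  have h := CCB_listprod_deg D (w.zipIdx.map fun p => (μ p.1).map (shiftP p.2)) ?_ a b
  · simpa [muWord] using h
  · intro A hA a b
    simp only [List.mem_map] at hA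
    obtain ⟨p, _, rfl⟩ := hA
    simpa [Matrix.map_apply] using (CCB_natDegree_shiftP _ _).trans (hμ _ _ _)

lemma CCB_backF_deg {S : Type*} {n : ℕ} (D : ℕ) (μ : S → Matrix (Fin n) (Fin n) (Polynomial ℚ))
    (β : Fin n → Polynomial ℚ) (hμ : ∀ σ a b, ((μ σ) a b).natDegree ≤ D)
    (hβ : ∀ i, (β i).natDegree ≤ D) (w : List S) (a : Fin n) :
    ((backF μ β w) a).natDegree ≤ D * (w.length + 1) := by
  unfold backF
  simp only [Matrix.mulVec, dotProduct]
  apply Polynomial.natDegree_sum_le_of_forall_le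
  intro b _
  refine (Polynomial.natDegree_mul_le).trans ?_
  have h1 := CCB_muWord_deg D μ hμ w a b
  have h2 := (CCB_natDegree_shiftP w.length (β b)).trans (hβ b)
  calc _ ≤ D * w.length + D := by omega
  _ = D * (w.length + 1) := by ring

lemma CCB_backF_nil {S : Type*} {n : ℕ} (μ : S → Matrix (Fin n) (Fin n) (Polynomial ℚ))
    (β : Fin n → Polynomial ℚ) : backF μ β [] = β := by
  funext a
  simp [backF, muWord, shiftP]

lemma CCB_backF_zero {S : Type*} {n : ℕ} (μ : S → Matrix (Fin n) (Fin n) (Polynomial ℚ))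
    (w : List S) : backF μ (0 : Fin n → Polynomial ℚ) w = 0 := by
  have h0 : (fun i : Fin n => shiftP w.length ((0 : Fin n → Polynomial ℚ) i)) = 0 := by
    funext i; simp [shiftP]
  unfold backF
  rw [h0, Matrix.mulVec_zero]

local notation "Rx" => Polynomial ℚ
local notation "KK" => FractionRing (Polynomial ℚ)

noncomputable def CCB_phi (n : ℕ) : (Fin n → Polynomial ℚ) →ₗ[Polynomial ℚ]
    (Fin n → FractionRing (Polynomial ℚ)) :=
  LinearMap.compLeft (Algebra.linearMap (Polynomial ℚ) (FractionRing (Polynomial ℚ))) (Fin n)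

lemma CCB_phi_apply {n : ℕ} (v : Fin n → Rx) (a : Fin n) :
    CCB_phi n v a = algebraMap Rx KK (v a) := rfl

lemma CCB_phi_injective (n : ℕ) : Function.Injective (CCB_phi n) := by
  intro x y h
  funext a
  have := congrFun h a
  exact IsFractionRing.injective Rx KK this

noncomputable def CCB_rkS {n : ℕ} (N : Submodule Rx (Fin n → Rx)) :
    Submodule KK (Fin n → KK) :=
  Submodule.span KK (CCB_phi n '' N)

noncomputable def CCB_rk {n : ℕ} (N : Submodule Rx (Fin n → Rx)) : ℕ :=
  Module.finrank KK (CCB_rkS N)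

lemma CCB_rkS_mono {n : ℕ} {N N' : Submodule Rx (Fin n → Rx)} (h : N ≤ N') :
    CCB_rkS N ≤ CCB_rkS N' :=
  Submodule.span_mono (Set.image_mono h)

lemma CCB_rk_mono {n : ℕ} {N N' : Submodule Rx (Fin n → Rx)} (h : N ≤ N') :
    CCB_rk N ≤ CCB_rk N' :=
  Submodule.finrank_mono (CCB_rkS_mono h)

lemma CCB_rk_le {n : ℕ} (N : Submodule Rx (Fin n → Rx)) : CCB_rk N ≤ n := by
  refine (Submodule.finrank_le _).trans ?_
  rw [Module.finrank_pi]
  simp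

lemma CCB_rkS_span {n : ℕ} (s : Set (Fin n → Rx)) :
    CCB_rkS (Submodule.span Rx s) = Submodule.span KK (CCB_phi n '' s) := by
  unfold CCB_rkS
  have h1 : CCB_phi n '' (Submodule.span Rx s : Set (Fin n → Rx)) =
      (Submodule.map (CCB_phi n) (Submodule.span Rx s) : Set (Fin n → KK)) := rfl
  rw [h1, Submodule.map_span]
  exact Submodule.span_span_of_tower Rx KK _

-- membership helpers for degreeLT
lemma CCB_mem_degreeLT {e : ℕ} {p : Rx} (h : p.natDegree < e) : p ∈ degreeLT ℚ e := by
  rw [Polynomial.mem_degreeLT]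
  by_cases hp : p = 0
  · simp [hp]
  · rwa [← Polynomial.natDegree_lt_iff_degree_lt hp]

lemma CCB_natDegree_lt_of_mem {e : ℕ} {p : Rx} (h : p ∈ degreeLT ℚ e) (hp : p ≠ 0) :
    p.natDegree < e := by
  rw [Polynomial.mem_degreeLT] at h
  rwa [Polynomial.natDegree_lt_iff_degree_lt hp]

lemma CCB_mul_mem_degreeLT {k e : ℕ} {q p : Rx} (hq : q.natDegree ≤ k)
    (hp : p ∈ degreeLT ℚ e) : q * p ∈ degreeLT ℚ (k + e) := by
  by_cases h : q * p = 0
  · rw [h]; exact zero_mem _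
  · have hp0 : p ≠ 0 := fun h0 => h (by simp [h0])
    have hpn : p.natDegree < e := CCB_natDegree_lt_of_mem hp hp0
    apply CCB_mem_degreeLT
    have := Polynomial.natDegree_mul_le (p := q) (q := p)
    omega

-- pi submodule equivalence
noncomputable def CCB_piSubEquiv {ι : Type*} [Fintype ι] {V : Type*} [AddCommGroup V]
    [Module ℚ V] (p : Submodule ℚ V) :
    (Submodule.pi Set.univ fun _ : ι => p) ≃ₗ[ℚ] (ι → p) where
  toFun v := fun i => ⟨v.1 i, v.2 i (Set.mem_univ i)⟩
  map_add' x y := rfl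
  map_smul' c x := rfl
  invFun f := ⟨fun i => f i, fun i _ => (f i).2⟩
  left_inv x := rfl
  right_inv f := rfl

instance CCB_degreeLT_fd (e : ℕ) : FiniteDimensional ℚ (degreeLT ℚ e) :=
  Module.Finite.equiv (Polynomial.degreeLTEquiv ℚ e).symm

lemma CCB_finrank_degreeLT (e : ℕ) : Module.finrank ℚ (degreeLT ℚ e) = e := by
  rw [(Polynomial.degreeLTEquiv ℚ e).finrank_eq]
  simp [Module.finrank_pi]

noncomputable def CCB_Te (n e : ℕ) : Submodule ℚ (Fin n → Rx) :=
  Submodule.pi Set.univ fun _ : Fin n => degreeLT ℚ e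

instance CCB_Te_fd (n e : ℕ) : FiniteDimensional ℚ (CCB_Te n e) :=
  Module.Finite.equiv (CCB_piSubEquiv (ι := Fin n) (degreeLT ℚ e)).symm

lemma CCB_finrank_pi_degreeLT (r e : ℕ) :
    Module.finrank ℚ (Submodule.pi Set.univ fun _ : Fin r => degreeLT ℚ e) = r * e := by
  rw [(CCB_piSubEquiv (ι := Fin r) (degreeLT ℚ e)).finrank_eq]
  rw [Module.finrank_pi_fintype]
  simp [CCB_finrank_degreeLT]

noncomputable def CCB_SS {n : ℕ} (N : Submodule Rx (Fin n → Rx)) (e : ℕ) :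
    Submodule ℚ (Fin n → Rx) :=
  N.restrictScalars ℚ ⊓ CCB_Te n e

instance CCB_SS_fd {n : ℕ} (N : Submodule Rx (Fin n → Rx)) (e : ℕ) :
    FiniteDimensional ℚ (CCB_SS N e) :=
  Submodule.finiteDimensional_of_le inf_le_right


lemma CCB_row_select {n r : ℕ} (u : Fin r → (Fin n → KK))
    (hli : LinearIndependent KK u) :
    ∃ g : Fin r → Fin n, (Matrix.of fun b b' => u b' (g b)).det ≠ 0 := by
  classical
  -- the matrix with columns u
  set A : Matrix (Fin n) (Fin r) KK := Matrix.of fun a j => u j a with hA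
  have hAT : Aᵀ = Matrix.of fun j a => u j a := rfl
  -- rank of A is r
  have hspanA : Submodule.span KK (Set.range Aᵀ) = Submodule.span KK (Set.range u) := by
    congr 1
  have hrankA : A.rank = r := by
    rw [Matrix.rank_eq_finrank_span_cols, show Set.range A.col = Set.range Aᵀ from rfl, hspanA, finrank_span_eq_card hli]
    simp
  have hrankAT : (Aᵀ).rank = r := by rw [Matrix.rank_transpose]; exact hrankA
  -- rows of A span everything
  have hrows : Submodule.span KK (Set.range (fun a : Fin n => (A a : Fin r → KK))) = ⊤ := by
    apply Submodule.eq_top_of_finrank_eq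
    have h1 : (Aᵀ).rank = Module.finrank KK (Submodule.span KK (Set.range A)) := by
      rw [Matrix.rank_eq_finrank_span_cols]
      congr 1
    rw [Module.finrank_pi]
    have h2 : Set.range (fun a : Fin n => (A a : Fin r → KK)) = Set.range A := rfl
    rw [h2, ← h1, hrankAT]
    simp
  set rows : Fin n → (Fin r → KK) := fun a => A a with hrows_def
  obtain ⟨t, hts, htspan, htli⟩ := exists_linearIndependent KK (Set.range rows)
  rw [hrows] at htspan
  have htfin : Finite t := htli.finite
  haveI := Fintype.ofFinite t
  -- t is a basis of (Fin r → KK)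
  have hcard : Fintype.card t = r := by
    have hb : Basis t KK (Fin r → KK) := Basis.mk htli (by rw [Subtype.range_coe, htspan])
    have := Module.finrank_eq_card_basis hb
    rw [Module.finrank_pi] at this
    simp at this
    rw [← Nat.card_coe_set_eq, Nat.card_eq_fintype_card] at this
    omega
  set ε : Fin r ≃ t := (Fintype.equivFinOfCardEq hcard).symm with hε
  have hch : ∀ b : Fin r, ∃ a : Fin n, rows a = (ε b : Fin r → KK) := by
    intro b
    exact hts (ε b).2
  choose g hg using hch
  refine ⟨g, ?_⟩
  intro hdet
  obtain ⟨c, hc0, hcv⟩ := Matrix.exists_vecMul_eq_zero_iff.mpr hdet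
  -- independence of selected rows
  have hsel : LinearIndependent KK (fun b : Fin r => (ε b : Fin r → KK)) :=
    htli.comp ε ε.injective
  have hsum : ∑ b, c b • ((ε b : Fin r → KK)) = 0 := by
    funext j
    rw [Finset.sum_apply]
    have hj := congrFun hcv j
    simp only [Matrix.vecMul, dotProduct, Matrix.of_apply, Pi.zero_apply] at hj
    simp only [Pi.smul_apply, smul_eq_mul, Pi.zero_apply]
    rw [← hj]
    apply Finset.sum_congr rfl
    intro b _
    rw [← hg b]
    rfl
  have hall : ∀ b, c b = 0 := fun b => Fintype.linearIndependent_iff.mp hsel c hsum b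
  exact hc0 (funext hall)

lemma CCB_lower {n r d e : ℕ} (hde : d < e)
    (N : Submodule Rx (Fin n → Rx))
    (v : Fin r → (Fin n → Rx))
    (hvN : ∀ b, v b ∈ N)
    (hvdeg : ∀ b a, (v b a).natDegree ≤ d)
    (hli : LinearIndependent KK (fun b => CCB_phi n (v b))) :
    r * (e - d) ≤ Module.finrank ℚ (CCB_SS N e) := by
  classical
  set Dom := Submodule.pi Set.univ fun _ : Fin r => degreeLT ℚ (e - d) with hDom
  -- the linear combination map
  set Ψ : (Fin r → Rx) →ₗ[ℚ] (Fin n → Rx) :=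
    (Fintype.linearCombination Rx v).restrictScalars ℚ with hΨ
  have hΨapp : ∀ c : Fin r → Rx, Ψ c = ∑ b, c b • v b := by
    intro c; simp [hΨ, Fintype.linearCombination_apply]
  have hmem : ∀ c : Fin r → Rx, c ∈ Dom → Ψ c ∈ CCB_SS N e := by
    intro c hc
    rw [hΨapp]
    constructor
    · exact Submodule.sum_mem _ (fun b _ => Submodule.smul_mem _ _ (hvN b))
    · intro a _
      have : (∑ b, c b • v b) a = ∑ b, (v b a) * (c b) := by
        rw [Finset.sum_apply]
        apply Finset.sum_congr rfl
        intro b _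
        simp [mul_comm]
      rw [this]
      apply Submodule.sum_mem
      intro b _
      have h1 : (v b a).natDegree ≤ d := hvdeg b a
      have h2 : c b ∈ degreeLT ℚ (e - d) := hc b (Set.mem_univ b)
      have := CCB_mul_mem_degreeLT h1 h2
      rwa [show d + (e - d) = e by omega] at this
  set Ψ' : Dom →ₗ[ℚ] (CCB_SS N e) :=
    LinearMap.codRestrict _ (Ψ.comp Dom.subtype) (fun c => hmem _ c.2) with hΨ'
  have hinj : Function.Injective Ψ' := by
    intro c c' hcc
    have h0 : Ψ (c.1 - c'.1) = 0 := by
      have : Ψ c.1 = Ψ c'.1 := congrArg Subtype.val hcc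
      rw [map_sub, this, sub_self]
    rw [hΨapp] at h0
    have hφ : ∑ b, (algebraMap Rx KK ((c.1 - c'.1) b)) • (CCB_phi n (v b)) = 0 := by
      have := congrArg (CCB_phi n) h0
      rw [map_sum, map_zero] at this
      rw [← this]
      apply Finset.sum_congr rfl
      intro b _
      rw [LinearMap.map_smul, algebraMap_smul]
    have hz := Fintype.linearIndependent_iff.mp hli _ hφ
    have : c.1 - c'.1 = 0 := by
      funext b
      have := hz b
      have hinj2 := IsFractionRing.injective Rx KK
      have : (c.1 - c'.1) b = 0 := by
        apply hinj2
        simpa using this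
      simpa using this
    exact Subtype.ext (by rw [← sub_eq_zero]; exact this)
  have := LinearMap.finrank_le_finrank_of_injective hinj
  rwa [show Module.finrank ℚ Dom = r * (e - d) from CCB_finrank_pi_degreeLT r (e - d)] at this
lemma CCB_natDegree_det_le {r : ℕ} (A : Matrix (Fin r) (Fin r) Rx) (c : Fin r → ℕ)
    (h : ∀ i j, (A i j).natDegree ≤ c i) : (A.det).natDegree ≤ ∑ i, c i := by
  rw [Matrix.det_apply']
  apply Polynomial.natDegree_sum_le_of_forall_le
  intro σ _
  refine le_trans Polynomial.natDegree_mul_le ?_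
  have hε : (Polynomial.natDegree (((Equiv.Perm.sign σ : ℤ) : Rx))) = 0 :=
    Polynomial.natDegree_intCast _
  have hprod : (∏ i, A (σ i) i).natDegree ≤ ∑ i, c i := by
    refine le_trans (Polynomial.natDegree_prod_le _ _) ?_
    refine le_trans (Finset.sum_le_sum (fun i _ => h (σ i) i)) ?_
    rw [Equiv.sum_comp σ c]
  omega

lemma CCB_adjugate_deg {r d : ℕ} (A : Matrix (Fin r) (Fin r) Rx)
    (h : ∀ i j, (A i j).natDegree ≤ d) (i j : Fin r) :
    ((Matrix.adjugate A) i j).natDegree ≤ (r - 1) * d := by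
  classical
  rw [Matrix.adjugate_apply]
  refine le_trans (CCB_natDegree_det_le _ (fun b => if b = j then 0 else d) ?_) ?_
  · intro a b
    by_cases hb : a = j
    · subst hb
      rw [Matrix.updateRow_self]
      simp only [if_pos rfl]
      by_cases hib : i = b <;> simp [Pi.single_apply, hib]
    · rw [Matrix.updateRow_ne hb]
      simp only [if_neg hb]
      exact h a b
  · refine le_of_eq ?_
    rw [Finset.sum_ite]
    simp [Finset.filter_ne', Finset.card_erase_of_mem]

lemma CCB_upper {n r d e : ℕ}
    (N' : Submodule Rx (Fin n → Rx))
    (v : Fin r → (Fin n → Rx))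
    (hvdeg : ∀ b a, (v b a).natDegree ≤ d)
    (hli : LinearIndependent KK (fun b => CCB_phi n (v b)))
    (hspan : ∀ w ∈ N', CCB_phi n w ∈
      Submodule.span KK (Set.range (fun b => CCB_phi n (v b)))) :
    Module.finrank ℚ (CCB_SS N' e) ≤ r * ((r - 1) * d + e) := by
  classical
  obtain ⟨g, hdet⟩ := CCB_row_select (fun b => CCB_phi n (v b)) hli
  set VI : Matrix (Fin r) (Fin r) Rx := Matrix.of fun b b' => v b' (g b) with hVI
  have hadj : ∀ b b', ((Matrix.adjugate VI) b b').natDegree ≤ (r - 1) * d :=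
    fun b b' => CCB_adjugate_deg VI (fun i j => hvdeg j (g i)) b b'
  set Φ : (Fin n → Rx) →ₗ[ℚ] (Fin r → Rx) :=
    ((Matrix.mulVecLin (Matrix.adjugate VI)).restrictScalars ℚ).comp
      (LinearMap.funLeft ℚ Rx g) with hΦ
  have hΦapp : ∀ w, Φ w = (Matrix.adjugate VI).mulVec (fun b => w (g b)) := by
    intro w; rfl
  set Target := Submodule.pi Set.univ fun _ : Fin r => degreeLT ℚ ((r - 1) * d + e)
    with hTarget
  have hmemT : ∀ w : CCB_SS N' e, Φ w.1 ∈ Target := by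
    rintro ⟨w, hwN, hwT⟩
    intro b _
    rw [hΦapp]
    have : (Matrix.adjugate VI).mulVec (fun b => w (g b)) b
        = ∑ b', (Matrix.adjugate VI) b b' * w (g b') := by
      simp [Matrix.mulVec, dotProduct]
    rw [this]
    apply Submodule.sum_mem
    intro b' _
    exact CCB_mul_mem_degreeLT (hadj b b') (hwT (g b') (Set.mem_univ _))
  set Ξ : (CCB_SS N' e) →ₗ[ℚ] Target :=
    LinearMap.codRestrict _ (Φ.comp (CCB_SS N' e).subtype) hmemT with hΞ
  have hinj : Function.Injective Ξ := by
    intro w w' hww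
    have hz0 : Φ (w.1 - w'.1) = 0 := by
      have : Φ w.1 = Φ w'.1 := congrArg Subtype.val hww
      rw [map_sub, this, sub_self]
    set z := w.1 - w'.1 with hzdef
    have hzN : z ∈ N' := sub_mem w.2.1 w'.2.1
    obtain ⟨c, hc⟩ := (mem_span_range_iff_exists_fun KK).mp (hspan z hzN)
    set Usel : Matrix (Fin r) (Fin r) KK :=
      Matrix.of (fun b b' => (CCB_phi n (v b')) (g b)) with hUsel
    have hUmap : VI.map (algebraMap Rx KK) = Usel := rfl
    have hstep1 : (fun b => CCB_phi n z (g b)) = Usel.mulVec c := by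
      funext b
      rw [← hc]
      have : (∑ b', c b' • CCB_phi n (v b')) (g b) = ∑ b', c b' * (CCB_phi n (v b')) (g b) := by
        rw [Finset.sum_apply]
        simp
      rw [this]
      simp [Matrix.mulVec, dotProduct, hUsel, mul_comm]
    have hstep2 : (Matrix.adjugate Usel).mulVec (fun b => CCB_phi n z (g b)) = 0 := by
      funext b
      have hmapd : Matrix.adjugate Usel = (Matrix.adjugate VI).map (algebraMap Rx KK) := by
        rw [← hUmap]
        have h2 := RingHom.map_adjugate (algebraMap Rx KK) VI
        rw [RingHom.mapMatrix_apply, RingHom.mapMatrix_apply] at h2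
        rw [h2]
      rw [hmapd]
      have : ((Matrix.adjugate VI).map (algebraMap Rx KK)).mulVec
          (fun b => CCB_phi n z (g b)) b
          = algebraMap Rx KK (((Matrix.adjugate VI).mulVec (fun b => z (g b))) b) := by
        simp only [Matrix.mulVec, dotProduct, Matrix.map_apply, map_sum]
        apply Finset.sum_congr rfl
        intro b' _
        rw [_root_.map_mul]
        rfl
      rw [this, ← hΦapp, hz0]
      simp
    rw [hstep1, Matrix.mulVec_mulVec] at hstep2
    rw [Matrix.adjugate_mul, Matrix.smul_mulVec, Matrix.one_mulVec] at hstep2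
    have hdet' : Usel.det ≠ 0 := hdet
    have hc0 : c = 0 := by
      rcases smul_eq_zero.mp hstep2 with h | h
      · exact absurd h hdet'
      · exact h
    have hz : CCB_phi n z = 0 := by
      rw [← hc, hc0]
      simp
    have : z = 0 := by
      apply CCB_phi_injective n
      rw [hz, map_zero]
    exact Subtype.ext (by rw [← sub_eq_zero]; exact this)
  haveI : FiniteDimensional ℚ Target :=
    Module.Finite.equiv (CCB_piSubEquiv (ι := Fin r) (degreeLT ℚ ((r - 1) * d + e))).symm
  have hfr := LinearMap.finrank_le_finrank_of_injective hinj
  rwa [show Module.finrank ℚ Target = r * ((r - 1) * d + e) from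
    CCB_finrank_pi_degreeLT r _] at hfr
def CCB_F (D n : ℕ) : ℕ → ℕ
  | 0 => 0
  | r + 1 => CCB_F D n r + n ^ 2 * D * (CCB_F D n r + 1) + 1

lemma CCB_G_le (D n : ℕ) (hn : 2 ≤ n) : ∀ r, CCB_F D n r + 1 ≤ (n ^ 2 * (D + 1)) ^ r
  | 0 => by simp [CCB_F]
  | r + 1 => by
    have ih := CCB_G_le D n hn r
    have hP : 1 ≤ (n ^ 2 * (D + 1)) ^ r := Nat.one_le_pow _ _ (by positivity)
    have hn2 : 2 ≤ n ^ 2 := by nlinarith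
    show CCB_F D n r + n ^ 2 * D * (CCB_F D n r + 1) + 1 + 1 ≤ _
    set G := CCB_F D n r + 1 with hGdef
    set P := (n ^ 2 * (D + 1)) ^ r with hPdef
    have h3 : G * (n ^ 2 * D) ≤ P * (n ^ 2 * D) := Nat.mul_le_mul_right _ ih
    have h4 : P + 1 ≤ P * n ^ 2 := by nlinarith
    calc CCB_F D n r + n ^ 2 * D * (CCB_F D n r + 1) + 1 + 1
        = G + G * (n ^ 2 * D) + 1 := by rw [hGdef]; ring
      _ ≤ P + P * (n ^ 2 * D) + 1 := Nat.add_le_add (Nat.add_le_add ih h3) le_rfl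
      _ ≤ P * (n ^ 2 * D) + P * n ^ 2 := by
          rw [show P + P * (n ^ 2 * D) + 1 = P * (n ^ 2 * D) + (P + 1) from by ring]
          exact Nat.add_le_add_left h4 _
      _ = P * (n ^ 2 * (D + 1)) := by ring
      _ = (n ^ 2 * (D + 1)) ^ (r + 1) := by rw [hPdef, ← pow_succ]

lemma CCB_F_le (D n : ℕ) (hn : 1 ≤ n) : CCB_F D n n ≤ (D + 1) ^ n * n ^ (2 * n) := by
  rcases Nat.lt_or_ge n 2 with h1 | h2
  · have hn1 : n = 1 := by omega
    subst hn1
    show CCB_F D 1 0 + 1 ^ 2 * D * (CCB_F D 1 0 + 1) + 1 ≤ (D + 1) ^ 1 * 1 ^ 2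
    simp [CCB_F]
  · have h := CCB_G_le D n h2 n
    have heq : (n ^ 2 * (D + 1)) ^ n = (D + 1) ^ n * n ^ (2 * n) := by
      rw [mul_pow, ← pow_mul]
      ring
    rw [← heq]
    exact Nat.le_of_succ_le h
/-- Let `A = (α, μ, β)` be a P-finite automaton of dimension `n`
whose polynomial entries (of `β` and the `μ σ`) have degree at most `dmax`, and let
`C = [c₁, …, c_m]` be a totally suffix-closed sequence of words.  If the chain of
`ℚ[x]`-submodules `M i := span{B_A(c_j) : j ≤ i}` is strictly increasing, then
`m ≤ (dmax+1)^n · n^(2n)`. -/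
theorem column_count_bound
    {S : Type*} [Fintype S] (n m dmax : ℕ)
    (α : Fin n → ℚ) (μ : S → Matrix (Fin n) (Fin n) (Polynomial ℚ))
    (β : Fin n → Polynomial ℚ)
    (hβdeg : ∀ i, (β i).natDegree ≤ dmax)
    (hμdeg : ∀ (σ : S) (i j : Fin n), ((μ σ) i j).natDegree ≤ dmax)
    (C : Fin m → List S)
    (hsuffix : ∀ (i : Fin m) (s : List S), s <:+ C i → ∃ j : Fin m, j ≤ i ∧ C j = s)
    (M : Fin m → Submodule (Polynomial ℚ) (Fin n → Polynomial ℚ))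
    (hM : ∀ i : Fin m,
      M i = Submodule.span (Polynomial ℚ)
        ((fun j : Fin m => backF μ β (C j)) '' {j : Fin m | j ≤ i}))
    (hchain : ∀ (i : ℕ) (h : i + 1 < m),
      M ⟨i, Nat.lt_of_succ_lt h⟩ < M ⟨i + 1, h⟩) :
    m ≤ (dmax + 1) ^ n * n ^ (2 * n) := by
  classical
  rcases Nat.eq_zero_or_pos m with hm0 | hm
  · subst hm0; exact Nat.zero_le _
  have hbpos : 1 ≤ (dmax + 1) ^ n * n ^ (2 * n) ∨ n = 0 := by
    rcases Nat.eq_zero_or_pos n with h | h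
    · right; exact h
    · left
      have := Nat.one_le_pow n (dmax + 1) (by omega)
      have := Nat.one_le_pow (2 * n) n h
      exact Nat.one_le_iff_ne_zero.mpr (by positivity)
  rcases Nat.eq_zero_or_pos n with hn0 | hn
  · -- n = 0 case
    subst hn0
    have hb1 : (dmax + 1) ^ 0 * 0 ^ (2 * 0) = 1 := by norm_num
    rcases Nat.lt_or_ge m 2 with h2 | h2
    · omega
    · exfalso
      have hlt := hchain 0 (by omega)
      apply hlt.ne
      have hz : ∀ x : Fin 0 → Polynomial ℚ, x = 0 := fun x => funext fun i => i.elim0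
      apply le_antisymm <;> · intro x _; rw [hz x]; exact zero_mem _
  have hb1 : 1 ≤ (dmax + 1) ^ n * n ^ (2 * n) := by
    rcases hbpos with h | h
    · exact h
    · omega
  by_cases hβ : β = 0
  · -- all backward vectors vanish
    rcases Nat.lt_or_ge m 2 with h2 | h2
    · omega
    · exfalso
      have hlt := hchain 0 (by omega)
      apply hlt.not_ge
      rw [hM ⟨1, by omega⟩, Submodule.span_le]
      rintro x ⟨j, _, rfl⟩
      have hz : (fun j : Fin m => backF μ β (C j)) j = 0 := by
        simp only
        rw [hβ, CCB_backF_zero]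
      rw [hz]
      exact zero_mem _
  -- MAIN CASE
  set D := dmax with hD
  set B : Fin m → (Fin n → Polynomial ℚ) := fun j => backF μ β (C j) with hB
  have hMeq : ∀ i : Fin m, M i = Submodule.span (Polynomial ℚ) (B '' {j : Fin m | j ≤ i}) :=
    hM
  have hMmono : ∀ i j : Fin m, i ≤ j → M i ≤ M j := by
    intro i j hij
    rw [hMeq i, hMeq j]
    exact Submodule.span_mono (Set.image_mono (fun k hk => le_trans hk hij))
  have hBmem : ∀ (i j : Fin m), j ≤ i → B j ∈ M i := by
    intro i j hji
    rw [hMeq i]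
    exact Submodule.subset_span ⟨j, hji, rfl⟩
  have hnew : ∀ (k : ℕ) (h : k + 1 < m),
      B ⟨k + 1, h⟩ ∉ M ⟨k, Nat.lt_of_succ_lt h⟩ := by
    intro k h hmem
    apply (hchain k h).not_ge
    rw [hMeq ⟨k + 1, h⟩, Submodule.span_le]
    rintro x ⟨j, hj, rfl⟩
    have hj' : (j : ℕ) ≤ k + 1 := hj
    rcases Nat.lt_or_ge (j : ℕ) (k + 1) with hlt | hge
    · exact hBmem _ j (by exact Nat.lt_succ_iff.mp hlt)
    · have hjeq : j = ⟨k + 1, h⟩ := Fin.ext (le_antisymm hj' hge)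
      rw [hjeq]
      exact hmem
  have hC0 : C ⟨0, hm⟩ = [] := by
    obtain ⟨j, hj, hCj⟩ := hsuffix ⟨0, hm⟩ [] List.nil_suffix
    have hj0 : j = ⟨0, hm⟩ := Fin.ext (Nat.le_zero.mp hj)
    rwa [hj0] at hCj
  have hβmem : ∀ i : Fin m, β ∈ M i := by
    intro i
    have h0 : B ⟨0, hm⟩ = β := by
      simp only [hB]
      rw [hC0, CCB_backF_nil]
    have := hBmem i ⟨0, hm⟩ (by exact Nat.zero_le _)
    rwa [h0] at this
  have hBne : ∀ j k : Fin m, j < k → B j ≠ B k := by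
    intro j k hjk heq
    obtain ⟨kv, hkm⟩ := k
    cases kv with
    | zero => exact absurd hjk (by simp [Fin.lt_def])
    | succ k0 =>
      apply hnew k0 hkm
      have hjle : j ≤ (⟨k0, Nat.lt_of_succ_lt hkm⟩ : Fin m) := by
        have : (j : ℕ) < k0 + 1 := hjk
        exact Nat.lt_succ_iff.mp this
      have := hBmem ⟨k0, Nat.lt_of_succ_lt hkm⟩ j hjle
      rwa [heq] at this
  have hCinj : Function.Injective C := by
    intro j k h
    by_contra hne
    rcases lt_or_gt_of_ne hne with hlt | hlt
    · exact hBne j k hlt (by simp only [hB]; rw [h])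
    · exact hBne k j hlt (by simp only [hB]; rw [h])
  have hlen : ∀ i : Fin m, (C i).length ≤ (i : ℕ) := by
    intro i
    set l := (C i).length with hl
    have hex : ∀ t : Fin (l + 1), ∃ j : Fin m, j ≤ i ∧ C j = (C i).drop t := by
      intro t
      exact hsuffix i _ (List.drop_suffix _ _)
    choose jf hjle hjC using hex
    have hinj : Function.Injective (fun t : Fin (l + 1) => (⟨(jf t : ℕ), by
        have := hjle t; have : (jf t : ℕ) ≤ (i : ℕ) := this; omega⟩ : Fin ((i : ℕ) + 1))) := by
      intro t t' htt
      have h0 : ((jf t : ℕ)) = ((jf t' : ℕ)) :=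
        congrArg (fun z : Fin ((i : ℕ) + 1) => (z : ℕ)) htt
      have h1 : jf t = jf t' := Fin.ext h0
      have h2 : (C i).drop t = (C i).drop t' := by rw [← hjC t, ← hjC t', h1]
      have h3 := congrArg List.length h2
      rw [List.length_drop, List.length_drop] at h3
      have h4 := t.isLt
      have h5 := t'.isLt
      exact Fin.ext (by omega)
    have hcard := Fintype.card_le_of_injective _ hinj
    simpa using hcard
  have hBdeg : ∀ (j : Fin m) (a : Fin n), ((B j) a).natDegree ≤ D * ((j : ℕ) + 1) := by
    intro j a
    refine (CCB_backF_deg D μ β hμdeg hβdeg (C j) a).trans ?_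
    have h1 := hlen j
    exact Nat.mul_le_mul_left D (by omega)
  have hrk1 : ∀ i : Fin m, 1 ≤ CCB_rk (M i) := by
    intro i
    have hne : CCB_phi n β ≠ 0 := fun h => hβ (CCB_phi_injective n (by rw [h, map_zero]))
    have hmem : CCB_phi n β ∈ CCB_rkS (M i) := Submodule.subset_span ⟨β, hβmem i, rfl⟩
    by_contra hr
    have h0 : CCB_rk (M i) = 0 := by omega
    have hbot := Submodule.finrank_eq_zero.mp h0
    rw [hbot] at hmem
    exact hne (Submodule.mem_bot _ |>.mp hmem)
  have hrkn : ∀ i : Fin m, CCB_rk (M i) ≤ n := fun i => CCB_rk_le _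
  -- THE KEY STEP
  have key : ∀ i₀ i : Fin m, i₀ ≤ i → CCB_rk (M i₀) = CCB_rk (M i) →
      (i : ℕ) - (i₀ : ℕ) ≤ (CCB_rk (M i₀)) ^ 2 * (D * ((i₀ : ℕ) + 1)) := by
    intro i₀ i hle hrk
    set r := CCB_rk (M i₀) with hrdef
    set d := D * ((i₀ : ℕ) + 1) with hddef
    set e := D * ((i : ℕ) + 1) + 1 with hedef
    have hlei : (i₀ : ℕ) ≤ (i : ℕ) := hle
    have hde : d < e := by
      have h1 : (i₀ : ℕ) + 1 ≤ (i : ℕ) + 1 := by omega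
      have h2 := Nat.mul_le_mul_left D h1
      omega
    set s : Set (Fin n → FractionRing (Polynomial ℚ)) :=
      (fun j : Fin m => CCB_phi n (B j)) '' {j : Fin m | j ≤ i₀} with hsdef
    have hs : CCB_rkS (M i₀) = Submodule.span (FractionRing (Polynomial ℚ)) s := by
      rw [hMeq i₀, CCB_rkS_span, hsdef, ← Set.image_comp]
      rfl
    obtain ⟨t, hts, htspan, htli⟩ :=
      exists_linearIndependent (FractionRing (Polynomial ℚ)) s
    have htfin : Finite t := htli.finite
    haveI := Fintype.ofFinite t
    have hcard : Fintype.card t = r := by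
      have h1 := finrank_span_set_eq_card htli
      rw [htspan] at h1
      have h2 : r = Fintype.card t := by
        rw [hrdef]
        show Module.finrank (FractionRing (Polynomial ℚ)) (CCB_rkS (M i₀)) = _
        rw [hs, h1, Set.toFinset_card]
      exact h2.symm
    set ε : Fin r ≃ t := (Fintype.equivFinOfCardEq hcard).symm with hεdef
    have hch : ∀ b : Fin r, ∃ j : Fin m, j ≤ i₀ ∧ CCB_phi n (B j) = (ε b : _) := by
      intro b
      obtain ⟨j, hj, hjeq⟩ := hts (ε b).2
      exact ⟨j, hj, hjeq⟩
    choose js hjle hjeq using hch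
    set v : Fin r → (Fin n → Polynomial ℚ) := fun b => B (js b) with hvdef
    have hu : (fun b => CCB_phi n (v b)) = fun b => ((ε b : _) : Fin n → _) :=
      funext fun b => hjeq b
    have hli : LinearIndependent (FractionRing (Polynomial ℚ))
        (fun b => CCB_phi n (v b)) := by
      rw [hu]
      exact htli.comp ε ε.injective
    have hvN : ∀ b, v b ∈ M i₀ := fun b => hBmem i₀ (js b) (hjle b)
    have hvdeg : ∀ b a, (v b a).natDegree ≤ d := by
      intro b a
      refine (hBdeg (js b) a).trans ?_
      have h1 : ((js b : Fin m) : ℕ) ≤ (i₀ : ℕ) := hjle b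
      exact Nat.mul_le_mul_left D (by omega)
    have hrange : Submodule.span (FractionRing (Polynomial ℚ))
        (Set.range (fun b => CCB_phi n (v b))) = CCB_rkS (M i₀) := by
      rw [hu]
      have h1 : Set.range (fun b : Fin r => ((ε b : _) : Fin n → _)) = t := by
        have : Set.range (fun b : Fin r => ((ε b : _) : Fin n → _)) =
            Subtype.val '' Set.range ε := by rw [← Set.range_comp]; rfl
        rw [this, Equiv.range_eq_univ, Set.image_univ, Subtype.range_coe]
      rw [h1, htspan, ← hs]
    have hrkSeq : CCB_rkS (M i₀) = CCB_rkS (M i) := by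
      apply Submodule.eq_of_le_of_finrank_le (CCB_rkS_mono (hMmono _ _ hle))
      exact le_of_eq hrk.symm
    have hspan : ∀ w ∈ M i, CCB_phi n w ∈ Submodule.span (FractionRing (Polynomial ℚ))
        (Set.range (fun b => CCB_phi n (v b))) := by
      intro w hw
      rw [hrange, hrkSeq]
      exact Submodule.subset_span ⟨w, hw, rfl⟩
    have hlow := CCB_lower hde (M i₀) v hvN hvdeg hli
    have hupp := CCB_upper (e := e) (M i) v hvdeg hli hspan
    have hstep : ∀ k : ℕ, (hik : (i₀ : ℕ) + k ≤ (i : ℕ)) →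
        Module.finrank ℚ (CCB_SS (M i₀) e) + k ≤
          Module.finrank ℚ (CCB_SS (M ⟨(i₀ : ℕ) + k, by omega⟩) e) := by
      intro k
      induction k with
      | zero =>
        intro _
        have hfi : (⟨(i₀ : ℕ) + 0, by omega⟩ : Fin m) = i₀ := Fin.ext (by simp)
        rw [hfi]
        omega
      | succ k ih =>
        intro hk
        have hk' : (i₀ : ℕ) + k ≤ (i : ℕ) := by omega
        have h1 := ih hk'
        have hkm1 : (i₀ : ℕ) + k + 1 < m := by omega
        have hkm0 : (i₀ : ℕ) + k < m := by omega
        have hgi : (⟨(i₀ : ℕ) + (k + 1), by omega⟩ : Fin m) = ⟨(i₀ : ℕ) + k + 1, hkm1⟩ :=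
          Fin.ext (by simp [Nat.add_assoc])
        rw [hgi]
        have hlt : CCB_SS (M ⟨(i₀ : ℕ) + k, hkm0⟩) e <
            CCB_SS (M ⟨(i₀ : ℕ) + k + 1, hkm1⟩) e := by
          rw [SetLike.lt_iff_le_and_exists]
          constructor
          · refine inf_le_inf ?_ le_rfl
            intro x hx
            exact hMmono _ _ (by exact Nat.le_succ _) hx
          · refine ⟨B ⟨(i₀ : ℕ) + k + 1, hkm1⟩, ⟨?_, ?_⟩, ?_⟩
            · exact hBmem _ _ le_rfl
            · intro a _
              apply CCB_mem_degreeLT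
              refine lt_of_le_of_lt (hBdeg _ a) ?_
              show D * ((i₀ : ℕ) + k + 1 + 1) < e
              have h3 : D * ((i₀ : ℕ) + k + 1 + 1) ≤ D * ((i : ℕ) + 1) :=
                Nat.mul_le_mul_left D (by omega)
              omega
            · intro hmem
              exact hnew ((i₀ : ℕ) + k) hkm1 hmem.1
        have h2 := Submodule.finrank_lt_finrank_of_lt hlt
        omega
    have hcc := hstep ((i : ℕ) - (i₀ : ℕ)) (by omega)
    have hfi : (⟨(i₀ : ℕ) + ((i : ℕ) - (i₀ : ℕ)), by omega⟩ : Fin m) = i :=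
      Fin.ext (by simp; omega)
    rw [hfi] at hcc
    have hr1 : 1 ≤ r := hrk1 i₀
    obtain ⟨E, hEdef⟩ : ∃ E, e - d = E := ⟨e - d, rfl⟩
    rw [hEdef] at hlow
    have he : e = E + d := by omega
    have hrr : r * ((r - 1) * d + e) = r * r * d + r * E := by
      have h2 : r - 1 + 1 = r := Nat.succ_pred_eq_of_pos hr1
      calc r * ((r - 1) * d + e) = r * ((r - 1) * d + d + E) := by rw [he]; ring
        _ = r * ((r - 1 + 1) * d + E) := by ring
        _ = r * (r * d + E) := by rw [h2]
        _ = r * r * d + r * E := by ring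
    rw [hrr] at hupp
    have hfinal : r * E + ((i : ℕ) - (i₀ : ℕ)) ≤ r * E + r * r * d := by
      calc r * E + ((i : ℕ) - (i₀ : ℕ))
          ≤ Module.finrank ℚ (CCB_SS (M i₀) e) + ((i : ℕ) - (i₀ : ℕ)) :=
            Nat.add_le_add_right hlow _
        _ ≤ Module.finrank ℚ (CCB_SS (M i) e) := hcc
        _ ≤ r * r * d + r * E := hupp
        _ = r * E + r * r * d := by ring
    have := Nat.le_of_add_le_add_left hfinal
    calc (i : ℕ) - (i₀ : ℕ) ≤ r * r * d := this
      _ = r ^ 2 * d := by ring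
  -- THE INDUCTION
  have claim : ∀ r : ℕ, ∀ i : Fin m, CCB_rk (M i) ≤ r → (i : ℕ) + 1 ≤ CCB_F D n r := by
    intro r
    induction r with
    | zero =>
      intro i hi
      exact absurd hi (by have := hrk1 i; omega)
    | succ r ih =>
      intro i hi
      rcases Nat.lt_or_ge (CCB_rk (M i)) (r + 1) with hlt | hge
      · have h1 := ih i (by omega)
        have hFmono : CCB_F D n r ≤ CCB_F D n (r + 1) := by
          show CCB_F D n r ≤ CCB_F D n r + n ^ 2 * D * (CCB_F D n r + 1) + 1
          omega
        omega
      · have hre : CCB_rk (M i) = r + 1 := by omega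
        have hexP : ∃ k : ℕ, ∃ hk : k < m, CCB_rk (M ⟨k, hk⟩) = r + 1 :=
          ⟨(i : ℕ), i.isLt, by rwa [Fin.eta]⟩
        set k₀ := Nat.find hexP with hk₀def
        obtain ⟨hk₀m, hk₀rk⟩ := Nat.find_spec hexP
        have hk₀le : k₀ ≤ (i : ℕ) := Nat.find_le ⟨i.isLt, by rwa [Fin.eta]⟩
        have hk₀F : k₀ ≤ CCB_F D n r := by
          rcases Nat.eq_zero_or_pos k₀ with h0 | hpos
          · omega
          · have hk'm : k₀ - 1 < m := by omega
            have hk'rk : CCB_rk (M ⟨k₀ - 1, hk'm⟩) ≤ r := by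
              have hmono := CCB_rk_mono
                (hMmono ⟨k₀ - 1, hk'm⟩ ⟨k₀, hk₀m⟩ (by exact Nat.sub_le _ _))
              rw [hk₀rk] at hmono
              have hne : ¬ (∃ hk : k₀ - 1 < m, CCB_rk (M ⟨k₀ - 1, hk⟩) = r + 1) :=
                Nat.find_min hexP (by omega)
              by_contra hgt
              push_neg at hgt
              exact hne ⟨hk'm, by omega⟩
            have h2 := ih ⟨k₀ - 1, hk'm⟩ hk'rk
            have h3 : (((⟨k₀ - 1, hk'm⟩ : Fin m)) : ℕ) = k₀ - 1 := rfl
            omega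
        have hkey := key ⟨k₀, hk₀m⟩ i (by exact hk₀le) (by rw [hk₀rk, hre])
        rw [hk₀rk] at hkey
        have hr1n : r + 1 ≤ n := by rw [← hre]; exact hrkn i
        have hb2 : (r + 1) ^ 2 * (D * (k₀ + 1)) ≤ n ^ 2 * (D * (CCB_F D n r + 1)) :=
          Nat.mul_le_mul (Nat.pow_le_pow_left hr1n 2)
            (Nat.mul_le_mul_left D (by omega))
        have hi2 : (i : ℕ) ≤ (r + 1) ^ 2 * (D * (k₀ + 1)) + k₀ :=
          Nat.sub_le_iff_le_add.mp hkey
        calc (i : ℕ) + 1 ≤ ((r + 1) ^ 2 * (D * (k₀ + 1)) + k₀) + 1 :=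
              Nat.add_le_add_right hi2 1
          _ ≤ (n ^ 2 * (D * (CCB_F D n r + 1)) + CCB_F D n r) + 1 :=
              Nat.add_le_add_right (Nat.add_le_add hb2 hk₀F) 1
          _ = CCB_F D n r + n ^ 2 * D * (CCB_F D n r + 1) + 1 := by ring
          _ = CCB_F D n (r + 1) := rfl
  have hfin := claim n ⟨m - 1, by omega⟩ (hrkn _)
  have hFle : CCB_F D n n ≤ (D + 1) ^ n * n ^ (2 * n) := CCB_F_le D n hn
  have h4 : ((((⟨m - 1, by omega⟩ : Fin m)) : ℕ)) = m - 1 := rfl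
  omega
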